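/- Let $\pi$ be a probability measure, $t>0$, $0\le\lambda<1$, $f_k$ a measurable function with values in $[0,1]$, and suppose $r_{t,k}>\lambda\,\mathrm{ess\,sup}\,e^{tf_k}$ solves $\int\frac{(1-\lambda)e^{tf_k}}{r_{t,k}-\lambda e^{tf_k}}d\pi=1$. Then the operator norm of $\widehat{Q}_{t,k}$ on $L^2(\pi)$ equals $r_{t,k}$, where $\widehat{Q}_{t,k}h(x)=e^{tf_k(x)/2}\big((1-\lambda)\pi(e^{tf_k/2}h)+\lambda e^{tf_k(x)/2}h(x)\big)$. -/

import Mathlib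

open MeasureTheory

lemma quad_cs {A B A' A'' B' B'' : ℝ} (hA' : 0 ≤ A') (hA'' : 0 ≤ A'')
    (hB' : 0 ≤ B') (hB'' : 0 ≤ B'') (hA : A ^ 2 ≤ A' * A'') (hB : B ^ 2 ≤ B' * B'') :
    (A + B) ^ 2 ≤ (A' + B') * (A'' + B'') := by
  nlinarith [sq_nonneg (A'*B'' - A''*B'), sq_nonneg (A*B'' - B*A''), sq_nonneg (A*B' - B*A'),
    sq_nonneg (A - B), sq_nonneg (A + B), mul_nonneg hA' hB'', mul_nonneg hA'' hB',
    mul_le_mul hA hB (sq_nonneg B) (mul_nonneg hA' hA'')]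

lemma int_cs {X : Type*} [MeasurableSpace X] {μ : Measure X} {F G : X → ℝ}
    (hF : AEStronglyMeasurable F μ) (hG : AEStronglyMeasurable G μ)
    (hF0 : 0 ≤ᵐ[μ] F) (hG0 : 0 ≤ᵐ[μ] G)
    (hF2 : Integrable (fun x => F x ^ 2) μ) (hG2 : Integrable (fun x => G x ^ 2) μ) :
    (∫ x, F x * G x ∂μ) ^ 2 ≤ (∫ x, F x ^ 2 ∂μ) * (∫ x, G x ^ 2 ∂μ) := by
  have hpq : Real.HolderConjugate 2 2 := by constructor <;> norm_num
  have hFm : MemLp F (ENNReal.ofReal 2) μ := by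
    rw [show ENNReal.ofReal 2 = (2 : ENNReal) by norm_num]
    exact (memLp_two_iff_integrable_sq hF).2 hF2
  have hGm : MemLp G (ENNReal.ofReal 2) μ := by
    rw [show ENNReal.ofReal 2 = (2 : ENNReal) by norm_num]
    exact (memLp_two_iff_integrable_sq hG).2 hG2
  have h := integral_mul_le_Lp_mul_Lq_of_nonneg hpq hF0 hG0 hFm hGm
  have hFi : 0 ≤ ∫ x, F x ^ 2 ∂μ := integral_nonneg fun x => sq_nonneg _
  have hGi : 0 ≤ ∫ x, G x ^ 2 ∂μ := integral_nonneg fun x => sq_nonneg _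
  have hfg0 : 0 ≤ ∫ x, F x * G x ∂μ := by
    refine integral_nonneg_of_ae ?_
    filter_upwards [hF0, hG0] with x h1 h2 using mul_nonneg h1 h2
  calc (∫ x, F x * G x ∂μ) ^ 2
      ≤ ((∫ a, F a ^ (2:ℝ) ∂μ) ^ ((1:ℝ)/2) * (∫ a, G a ^ (2:ℝ) ∂μ) ^ ((1:ℝ)/2)) ^ 2 := by
        apply pow_le_pow_left₀ hfg0 h
    _ = (∫ x, F x ^ 2 ∂μ) * (∫ x, G x ^ 2 ∂μ) := by
        have e2 : ∀ (A : ℝ), 0 ≤ A → (A ^ ((1:ℝ)/2)) ^ 2 = A := by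
          intro A hA
          rw [← Real.rpow_natCast (A ^ ((1:ℝ)/2)) 2, ← Real.rpow_mul hA]
          norm_num
        have e1 : ∀ (f : X → ℝ), (fun a => f a ^ (2:ℝ)) = fun a => f a ^ 2 := by
          intro f; funext a; rw [Real.rpow_two]
        rw [mul_pow, e1 F, e1 G, e2 _ hFi, e2 _ hGi]

set_option maxHeartbeats 1000000 in
/-- Lemma 4.2(i): if `r > λ esssup e^{tf_k}` solves
`∫ (1-λ)e^{tf_k}/(r - λe^{tf_k}) dπ = 1`, then the operator norm of the tilted operator
`Q̂_{t,k}` on `L²(π)` equals `r`. -/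
theorem hoeffding_stmt6
    {X : Type*} [MeasurableSpace X] (π : Measure X) [IsProbabilityMeasure π]
    (fk : X → ℝ) (hfk : Measurable fk) (hfk01 : ∀ x, fk x ∈ Set.Icc (0 : ℝ) 1)
    (lam : ℝ) (hlam0 : 0 ≤ lam) (hlam1 : lam < 1) (t : ℝ) (ht : 0 < t)
    (r : ℝ) (hr : r > lam * essSup (fun x => Real.exp (t * fk x)) π)
    (hreq : ∫ x, (1 - lam) * Real.exp (t * fk x) / (r - lam * Real.exp (t * fk x)) ∂π = 1)
    (Qhat : Lp ℝ 2 π →L[ℝ] Lp ℝ 2 π)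
    (hQhat : ∀ h : Lp ℝ 2 π, Qhat h =ᵐ[π] fun x => Real.exp (t * fk x / 2) *
      ((1 - lam) * ∫ y, Real.exp (t * fk y / 2) * h y ∂π
        + lam * Real.exp (t * fk x / 2) * h x)) :
    ‖Qhat‖ = r := by
  classical
  set u : X → ℝ := fun x => Real.exp (t * fk x / 2) with hu_def
  have hu_eq : ∀ x, Real.exp (t * fk x / 2) = u x := fun x => rfl
  have hu_meas : Measurable u := ((hfk.const_mul t).div_const 2).exp
  have hu_pos : ∀ x, 0 < u x := fun x => Real.exp_pos _
  have hu_one : ∀ x, 1 ≤ u x := fun x =>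
    Real.one_le_exp (div_nonneg (mul_nonneg ht.le (hfk01 x).1) (by norm_num))
  have hu_le : ∀ x, u x ≤ Real.exp (t / 2) := fun x =>
    Real.exp_le_exp.2 (by nlinarith [(hfk01 x).2, ht.le])
  have hsq : ∀ x, u x ^ 2 = Real.exp (t * fk x) := fun x => by
    show Real.exp (t * fk x / 2) ^ 2 = _
    rw [sq, ← Real.exp_add]; ring_nf
  have h1lam : (0:ℝ) < 1 - lam := by linarith
  -- basic facts about the essential supremum
  have hSae : ∀ᵐ x ∂π, Real.exp (t * fk x) ≤ essSup (fun x => Real.exp (t * fk x)) π := by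
    apply ae_le_essSup
    exact Filter.isBoundedUnder_of
      ⟨Real.exp t, fun x => Real.exp_le_exp.2 (by nlinarith [(hfk01 x).2, ht.le])⟩
  set S := essSup (fun x => Real.exp (t * fk x)) π with hS_def
  have hS1 : 1 ≤ S := by
    obtain ⟨x₀, hx₀⟩ := hSae.exists
    exact le_trans (Real.one_le_exp (mul_nonneg ht.le (hfk01 x₀).1)) hx₀
  have hδ : 0 < r - lam * S := sub_pos.2 hr
  have hr0 : 0 < r := lt_of_le_of_lt (mul_nonneg hlam0 (le_trans zero_le_one hS1)) hr
  set d : X → ℝ := fun x => r - lam * u x ^ 2 with hd_def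
  have hd_eq : ∀ x, d x = r - lam * u x ^ 2 := fun x => rfl
  have hd_meas : Measurable d := measurable_const.sub ((hu_meas.pow_const 2).const_mul lam)
  set g : X → ℝ := fun x => u x / d x with hg_def
  have hg_eq : ∀ x, g x = u x / d x := fun x => rfl
  have hg_meas : Measurable g := hu_meas.div hd_meas
  have hdae : ∀ᵐ x ∂π, r - lam * S ≤ d x := by
    filter_upwards [hSae] with x hx
    have h1 : lam * u x ^ 2 ≤ lam * S := by
      rw [hsq x]; exact mul_le_mul_of_nonneg_left hx hlam0
    rw [hd_eq]; linarith
  have hdr : ∀ x, d x ≤ r := fun x => by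
    have : 0 ≤ lam * u x ^ 2 := mul_nonneg hlam0 (sq_nonneg _)
    rw [hd_eq]; linarith
  have hgae : ∀ᵐ x ∂π, 1 / r ≤ g x ∧ g x ≤ Real.exp (t/2) / (r - lam * S) := by
    filter_upwards [hdae] with x hx
    have hd0 : 0 < d x := lt_of_lt_of_le hδ hx
    constructor
    · rw [hg_eq, div_le_div_iff₀ hr0 hd0]
      nlinarith [hu_one x, hdr x]
    · rw [hg_eq]
      exact div_le_div₀ (Real.exp_pos _).le (hu_le x) hδ hx
  have hg_nonneg : ∀ᵐ x ∂π, 0 ≤ g x := by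
    filter_upwards [hgae] with x hx
    exact le_trans (by positivity) hx.1
  -- the key pointwise eigen-identity
  have hkey : ∀ᵐ x ∂π, r * g x = u x + lam * u x ^ 2 * g x := by
    filter_upwards [hdae] with x hx
    have hd0 : d x ≠ 0 := (lt_of_lt_of_le hδ hx).ne'
    rw [hg_eq]
    field_simp
    rw [hd_eq]; ring
  -- the normalization identity
  have hK : (1 - lam) * ∫ x, u x * g x ∂π = 1 := by
    have e : ∫ x, (1 - lam) * (u x * g x) ∂π
        = ∫ x, (1 - lam) * Real.exp (t * fk x) / (r - lam * Real.exp (t * fk x)) ∂π := by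
      refine integral_congr_ae (Filter.Eventually.of_forall fun x => ?_)
      show (1 - lam) * (u x * g x)
        = (1 - lam) * Real.exp (t * fk x) / (r - lam * Real.exp (t * fk x))
      rw [← hsq x, hg_eq, hd_eq]
      ring
    rw [← integral_const_mul, e, hreq]
  have hK0 : 0 ≤ ∫ x, u x * g x ∂π := by
    refine integral_nonneg_of_ae ?_
    filter_upwards [hg_nonneg] with x hx using mul_nonneg (hu_pos x).le hx
  -- integrability of u * g
  have hug_int : Integrable (fun x => u x * g x) π := by
    refine Integrable.mono' (integrable_const (Real.exp (t/2) * (Real.exp (t/2) / (r - lam * S))))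
      ((hu_meas.mul hg_meas).aestronglyMeasurable) ?_
    filter_upwards [hgae, hg_nonneg] with x hx hx0
    rw [Real.norm_eq_abs, abs_of_nonneg (mul_nonneg (hu_pos x).le hx0)]
    exact mul_le_mul (hu_le x) hx.2 hx0 (Real.exp_pos _).le
  -- lower bound via the eigenfunction g
  have hgmem : MemLp g 2 π := by
    refine MemLp.of_bound hg_meas.aestronglyMeasurable (Real.exp (t/2) / (r - lam * S)) ?_
    filter_upwards [hgae, hg_nonneg] with x hx hx0
    rw [Real.norm_eq_abs, abs_of_nonneg hx0]
    exact hx.2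
  have hGae : (hgmem.toLp g : X → ℝ) =ᵐ[π] g := hgmem.coeFn_toLp
  have hQG : Qhat (hgmem.toLp g) = r • (hgmem.toLp g) := by
    apply Lp.ext
    have hint : ∫ y, Real.exp (t * fk y / 2) * (hgmem.toLp g) y ∂π = ∫ x, u x * g x ∂π := by
      refine integral_congr_ae ?_
      filter_upwards [hGae] with y hy
      rw [hy, hu_eq]
    refine (hQhat (hgmem.toLp g)).trans ?_
    refine Filter.EventuallyEq.trans ?_ (Lp.coeFn_smul (r : ℝ) (hgmem.toLp g)).symm
    filter_upwards [hGae, hkey] with x hx hkx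
    rw [hint]
    simp only [Pi.smul_apply, smul_eq_mul, hx, hu_eq]
    rw [hkx]
    have h2 : (1 - lam) * ∫ x, u x * g x ∂π = 1 := hK
    linear_combination u x * h2
  have hGpos : 0 < ‖hgmem.toLp g‖ := by
    rw [norm_pos_iff]
    intro h0
    have hzero : g =ᵐ[π] 0 := hGae.symm.trans (by rw [h0]; exact Lp.coeFn_zero ℝ 2 π)
    obtain ⟨x, hx1, hx2⟩ := (hzero.and hgae).exists
    rw [Pi.zero_apply] at hx1
    have : (0:ℝ) < 1 / r := by positivity
    rw [hx1] at hx2; linarith [hx2.1]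
  have hlow : r ≤ ‖Qhat‖ := by
    have h1 := Qhat.le_opNorm (hgmem.toLp g)
    rw [hQG, norm_smul, Real.norm_eq_abs, abs_of_pos hr0] at h1
    exact le_of_mul_le_mul_right h1 hGpos
  -- upper bound
  refine le_antisymm (Qhat.opNorm_le_bound hr0.le fun h => ?_) hlow
  have hhm : AEStronglyMeasurable (⇑h) π := Lp.aestronglyMeasurable h
  have hh2 : Integrable (fun x => (h x)^2) π := (memLp_two_iff_integrable_sq hhm).1 (Lp.memLp h)
  have hh1 : Integrable (⇑h) π := (Lp.memLp h).integrable (by norm_num)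
  set ψ : X → ℝ := fun x => (h x)^2 / g x with hψ_def
  have hψ_eq : ∀ x, ψ x = (h x)^2 / g x := fun x => rfl
  have hψm : AEStronglyMeasurable ψ π := by
    have : AEStronglyMeasurable (fun x => (h x)^2 * (g x)⁻¹) π :=
      ((continuous_pow 2).comp_aestronglyMeasurable hhm).mul hg_meas.inv.aestronglyMeasurable
    exact this.congr (Filter.Eventually.of_forall fun x => (div_eq_mul_inv _ _).symm)
  have hψae : ∀ᵐ x ∂π, 0 ≤ ψ x ∧ ψ x ≤ r * (h x)^2 ∧ g x * ψ x = (h x)^2 := by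
    filter_upwards [hgae] with x hx
    have hg0 : 0 < g x := lt_of_lt_of_le (by positivity) hx.1
    have hrg : 1 ≤ g x * r := by
      have h1 : (1:ℝ)/r * r ≤ g x * r := mul_le_mul_of_nonneg_right hx.1 hr0.le
      rwa [one_div, inv_mul_cancel₀ hr0.ne'] at h1
    refine ⟨div_nonneg (sq_nonneg _) hg0.le, ?_, ?_⟩
    · rw [hψ_eq, div_le_iff₀ hg0]
      nlinarith [sq_nonneg (h x)]
    · rw [hψ_eq, mul_comm, div_mul_cancel₀ _ hg0.ne']
  -- integrability facts
  have huh_int : Integrable (fun x => u x * h x) π := by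
    refine hh1.bdd_mul hu_meas.aestronglyMeasurable (c := Real.exp (t/2)) (Filter.Eventually.of_forall fun x => ?_)
    rw [Real.norm_eq_abs, abs_of_pos (hu_pos x)]; exact hu_le x
  have huψ_int : Integrable (fun x => u x * ψ x) π := by
    refine Integrable.mono' ((hh2.const_mul (Real.exp (t/2) * r))) 
      (hu_meas.aestronglyMeasurable.mul hψm) ?_
    filter_upwards [hψae] with x hx
    rw [Real.norm_eq_abs, abs_of_nonneg (mul_nonneg (hu_pos x).le hx.1)]
    calc u x * ψ x ≤ Real.exp (t/2) * (r * (h x)^2) :=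
          mul_le_mul (hu_le x) hx.2.1 hx.1 (Real.exp_pos _).le
      _ = Real.exp (t/2) * r * (h x)^2 := by ring
  have hu2h2_int : Integrable (fun x => u x^2 * (h x)^2) π := by
    refine Integrable.mono' (hh2.const_mul (Real.exp (t/2)^2))
      ((hu_meas.pow_const 2).aestronglyMeasurable.mul
        ((continuous_pow 2).comp_aestronglyMeasurable hhm)) ?_
    refine Filter.Eventually.of_forall fun x => ?_
    rw [Real.norm_eq_abs, abs_of_nonneg (mul_nonneg (sq_nonneg _) (sq_nonneg _))]
    exact mul_le_mul_of_nonneg_right (pow_le_pow_left₀ (hu_pos x).le (hu_le x) 2) (sq_nonneg _)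
  have hIψ0 : 0 ≤ ∫ x, u x * ψ x ∂π := by
    refine integral_nonneg_of_ae ?_
    filter_upwards [hψae] with x hx using mul_nonneg (hu_pos x).le hx.1
  -- Cauchy-Schwarz: I² ≤ K * Iψ
  have hCS : (∫ y, u y * h y ∂π) ^ 2 ≤ (∫ x, u x * g x ∂π) * ∫ x, u x * ψ x ∂π := by
    set F : X → ℝ := fun x => Real.sqrt (u x * g x) with hF_def
    set Gf : X → ℝ := fun x => Real.sqrt (u x * ψ x) with hGf_def
    have hF2 : (fun x => F x ^ 2) =ᵐ[π] fun x => u x * g x := by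
      filter_upwards [hg_nonneg] with x hx
      exact Real.sq_sqrt (mul_nonneg (hu_pos x).le hx)
    have hG2 : (fun x => Gf x ^ 2) =ᵐ[π] fun x => u x * ψ x := by
      filter_upwards [hψae] with x hx
      exact Real.sq_sqrt (mul_nonneg (hu_pos x).le hx.1)
    have hFG : (fun x => F x * Gf x) =ᵐ[π] fun x => u x * |h x| := by
      filter_upwards [hg_nonneg, hψae] with x hx1 hx2
      have e1 : F x * Gf x = Real.sqrt ((u x * g x) * (u x * ψ x)) :=
        (Real.sqrt_mul (mul_nonneg (hu_pos x).le hx1) _).symm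
      have e2 : (u x * g x) * (u x * ψ x) = (u x * |h x|)^2 := by
        have : g x * ψ x = (h x)^2 := hx2.2.2
        calc (u x * g x) * (u x * ψ x) = u x ^2 * (g x * ψ x) := by ring
          _ = u x^2 * (h x)^2 := by rw [this]
          _ = (u x * |h x|)^2 := by rw [mul_pow, sq_abs]
      rw [e1, e2, Real.sqrt_sq (mul_nonneg (hu_pos x).le (abs_nonneg _))]
    have hFmeas : AEStronglyMeasurable F π := (hu_meas.mul hg_meas).sqrt.aestronglyMeasurable
    have hGmeas : AEStronglyMeasurable Gf π :=
      Real.continuous_sqrt.comp_aestronglyMeasurable (hu_meas.aestronglyMeasurable.mul hψm)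
    have hF2i : Integrable (fun x => F x ^ 2) π := hug_int.congr hF2.symm
    have hG2i : Integrable (fun x => Gf x ^ 2) π := huψ_int.congr hG2.symm
    have key := int_cs (μ := π) hFmeas hGmeas
      (Filter.Eventually.of_forall fun x => Real.sqrt_nonneg _)
      (Filter.Eventually.of_forall fun x => Real.sqrt_nonneg _)
      hF2i hG2i
    rw [integral_congr_ae hFG, integral_congr_ae hF2, integral_congr_ae hG2] at key
    have habs : |∫ y, u y * h y ∂π| ≤ ∫ x, u x * |h x| ∂π := by
      have h1 : ‖∫ y, u y * h y ∂π‖ ≤ ∫ y, ‖u y * h y‖ ∂π := norm_integral_le_integral_norm _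
      simp only [Real.norm_eq_abs] at h1
      refine h1.trans (le_of_eq (integral_congr_ae (Filter.Eventually.of_forall fun x => by
        simp [abs_mul, abs_of_pos (hu_pos x)])))
    calc (∫ y, u y * h y ∂π)^2 = |∫ y, u y * h y ∂π|^2 := (sq_abs _).symm
      _ ≤ (∫ x, u x * |h x| ∂π)^2 := by
          apply pow_le_pow_left₀ (abs_nonneg _) habs
      _ ≤ _ := key
  -- main pointwise inequality
  have hmain : ∀ᵐ x ∂π, ((Qhat h : X → ℝ) x)^2 ≤
      r * g x * ((1-lam) * u x * (∫ x, u x * ψ x ∂π) + lam * u x^2 * ψ x) := by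
    filter_upwards [hQhat h, hkey, hψae, hgae] with x hQx hkx hψx hgx
    have hg0 : 0 < g x := lt_of_lt_of_le (by positivity) hgx.1
    simp only [hu_eq] at hQx
    rw [hQx]
    have e1 : u x * ((1-lam) * (∫ y, u y * h y ∂π) + lam * u x * h x) =
        ((1-lam) * u x * (∫ y, u y * h y ∂π)) + (lam * u x^2 * h x) := by ring
    have e2 : r * g x * ((1-lam) * u x * (∫ x, u x * ψ x ∂π) + lam * u x^2 * ψ x) =
        ((1-lam) * u x * (∫ x, u x * g x ∂π) + lam * u x^2 * g x) *
          ((1-lam) * u x * (∫ x, u x * ψ x ∂π) + lam * u x^2 * ψ x) := by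
      have : (1-lam) * u x * (∫ x, u x * g x ∂π) + lam * u x^2 * g x = r * g x := by
        linear_combination u x * hK - hkx
      rw [this]
    rw [e1, e2]
    refine quad_cs ?_ ?_ ?_ ?_ ?_ ?_
    · exact mul_nonneg (mul_nonneg h1lam.le (hu_pos x).le) hK0
    · exact mul_nonneg (mul_nonneg h1lam.le (hu_pos x).le) hIψ0
    · exact mul_nonneg (mul_nonneg hlam0 (sq_nonneg _)) hg0.le
    · exact mul_nonneg (mul_nonneg hlam0 (sq_nonneg _)) hψx.1
    · have hmul := mul_le_mul_of_nonneg_left hCS (sq_nonneg ((1-lam) * u x))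
      calc ((1-lam) * u x * (∫ y, u y * h y ∂π))^2
          = ((1-lam) * u x)^2 * (∫ y, u y * h y ∂π)^2 := by ring
        _ ≤ ((1-lam) * u x)^2 * ((∫ x, u x * g x ∂π) * ∫ x, u x * ψ x ∂π) := hmul
        _ = ((1-lam) * u x * (∫ x, u x * g x ∂π)) * ((1-lam) * u x * (∫ x, u x * ψ x ∂π)) := by
            ring
    · have e3 : (lam * u x^2 * g x) * (lam * u x^2 * ψ x) = lam^2 * u x^4 * (g x * ψ x) := by
        ring
      rw [e3, hψx.2.2]
      exact le_of_eq (by ring)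
  -- integrate the pointwise inequality
  have hQh2_int : Integrable (fun x => ((Qhat h : X → ℝ) x)^2) π :=
    (memLp_two_iff_integrable_sq (Lp.aestronglyMeasurable (Qhat h))).1 (Lp.memLp (Qhat h))
  have hrhs_eq : (fun x => r * g x * ((1-lam) * u x * (∫ x, u x * ψ x ∂π) + lam * u x^2 * ψ x))
      =ᵐ[π] fun x => r * ((1-lam) * (∫ x, u x * ψ x ∂π) * (u x * g x) + lam * (u x^2 * (h x)^2)) := by
    filter_upwards [hψae] with x hx
    have e : r * g x * ((1-lam) * u x * (∫ x, u x * ψ x ∂π) + lam * u x^2 * ψ x)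
        = r * ((1-lam) * (∫ x, u x * ψ x ∂π) * (u x * g x) + lam * (u x^2 * (g x * ψ x))) := by
      ring
    rw [e, hx.2.2]
  have hrhs_int : Integrable
      (fun x => r * g x * ((1-lam) * u x * (∫ x, u x * ψ x ∂π) + lam * u x^2 * ψ x)) π := by
    refine Integrable.congr ?_ hrhs_eq.symm
    exact ((hug_int.const_mul ((1-lam) * (∫ x, u x * ψ x ∂π))).add
      (hu2h2_int.const_mul lam)).const_mul r
  have hint1 : ∫ x, ((Qhat h : X → ℝ) x)^2 ∂π ≤
      r * ((1-lam) * (∫ x, u x * ψ x ∂π) * (∫ x, u x * g x ∂π) + lam * (∫ x, u x^2 * (h x)^2 ∂π)) := by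
    refine le_trans (integral_mono_ae hQh2_int hrhs_int hmain) (le_of_eq ?_)
    rw [integral_congr_ae hrhs_eq, integral_const_mul,
      integral_add ((hug_int.const_mul _)) (hu2h2_int.const_mul lam),
      integral_const_mul, integral_const_mul]
  -- the eigenvalue identity integrated against ψ
  have hid : (∫ x, u x * ψ x ∂π) + lam * (∫ x, u x^2 * (h x)^2 ∂π) = r * ∫ x, (h x)^2 ∂π := by
    have e : (fun x => r * (h x)^2) =ᵐ[π]
        fun x => u x * ψ x + lam * (u x^2 * (h x)^2) := by
      filter_upwards [hkey, hψae] with x hkx hψx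
      rw [← hψx.2.2]
      have e : r * (g x * ψ x) = (r * g x) * ψ x := by ring
      rw [e, hkx]
      ring
    calc (∫ x, u x * ψ x ∂π) + lam * (∫ x, u x^2 * (h x)^2 ∂π)
        = ∫ x, u x * ψ x + lam * (u x^2 * (h x)^2) ∂π := by
          rw [integral_add huψ_int (hu2h2_int.const_mul lam), integral_const_mul]
      _ = ∫ x, r * (h x)^2 ∂π := (integral_congr_ae e).symm
      _ = r * ∫ x, (h x)^2 ∂π := integral_const_mul _ _
  have hfinal : ∫ x, ((Qhat h : X → ℝ) x)^2 ∂π ≤ r^2 * ∫ x, (h x)^2 ∂π := by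
    refine hint1.trans (le_of_eq ?_)
    have h2 : (1-lam) * (∫ x, u x * g x ∂π) = 1 := hK
    calc r * ((1-lam) * (∫ x, u x * ψ x ∂π) * (∫ x, u x * g x ∂π)
          + lam * (∫ x, u x^2 * (h x)^2 ∂π))
        = r * ((∫ x, u x * ψ x ∂π) * ((1-lam) * (∫ x, u x * g x ∂π))
          + lam * (∫ x, u x^2 * (h x)^2 ∂π)) := by ring
      _ = r * ((∫ x, u x * ψ x ∂π) + lam * (∫ x, u x^2 * (h x)^2 ∂π)) := by rw [h2, mul_one]
      _ = r * (r * ∫ x, (h x)^2 ∂π) := by rw [hid]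
      _ = r^2 * ∫ x, (h x)^2 ∂π := by ring
  -- convert to norms
  have hnormsq : ∀ v : Lp ℝ 2 π, ‖v‖^2 = ∫ x, ((v : X → ℝ) x)^2 ∂π := by
    intro v
    rw [← real_inner_self_eq_norm_sq, L2.inner_def]
    refine integral_congr_ae (Filter.Eventually.of_forall fun x => ?_)
    show (inner ℝ ((v : X → ℝ) x) ((v : X → ℝ) x) : ℝ) = ((v : X → ℝ) x)^2
    rw [real_inner_self_eq_norm_sq, Real.norm_eq_abs, sq_abs]
  have hQn : ‖Qhat h‖^2 ≤ (r * ‖h‖)^2 := by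
    rw [hnormsq (Qhat h), mul_pow, hnormsq h]
    exact hfinal
  have hrn : 0 ≤ r * ‖h‖ := mul_nonneg hr0.le (norm_nonneg _)
  nlinarith [hQn, norm_nonneg (Qhat h), hrn]
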